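/- Fix an integer n ≥ 2 and let δ : [0,∞) → [0, 1/2) be nondecreasing with δ(t) → 0 as t → 0⁺. For an integer 1 ≤ j ≤ n define ψ₁^{(j)}(ε) = 2·arcsin(ε/(4√(j+1))), ψ₂^{(j)}(ε) = 2·arcsin(ε/(2√(j+1))), F(j,ε) = ∫_{ψ₂^{(j)}(ε)}^{π/2} sin(x)^{j−1} dx, G(j,ε) = ∫_0^{ψ₁^{(j)}(ε)} sin(x)^{j−1} dx, and w_j(r) = 1/(1 + (1 − 2δ(r/2))^{n−j}·(j+1)^{j+1}·F(j, r/2)/G(j, r/2)). Then for all integers 1 ≤ l < k ≤ n, lim_{r → 0⁺} w_l(r)/w_k(r) = +∞. -/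

import Mathlib

open Set Filter Topology

noncomputable section

def psi₁ (j : ℕ) (ε : ℝ) : ℝ := 2 * Real.arcsin (ε / (4 * Real.sqrt (j + 1)))

def psi₂ (j : ℕ) (ε : ℝ) : ℝ := 2 * Real.arcsin (ε / (2 * Real.sqrt (j + 1)))

def Fint (j : ℕ) (ε : ℝ) : ℝ :=
  ∫ x in (psi₂ j ε)..(Real.pi / 2), (Real.sin x) ^ (j - 1)

def Gint (j : ℕ) (ε : ℝ) : ℝ :=
  ∫ x in (0 : ℝ)..(psi₁ j ε), (Real.sin x) ^ (j - 1)

/-- The waist lower bound `w_j(r)` in codimension `n - j`. -/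
def wB (n j : ℕ) (δ : ℝ → ℝ) (r : ℝ) : ℝ :=
  1 / (1 + (1 - 2 * δ (r / 2)) ^ (n - j) * ((j : ℝ) + 1) ^ (j + 1) *
    (Fint j (r / 2) / Gint j (r / 2)))

lemma le_arcsin' {y : ℝ} (h0 : 0 ≤ y) (h1 : y ≤ 1) : y ≤ Real.arcsin y := by
  have h := Real.sin_arcsin (by linarith) h1
  have h2 := Real.sin_le (Real.arcsin_nonneg.mpr h0)
  linarith

lemma arcsin_le' {y : ℝ} (h0 : 0 ≤ y) (h1 : y ≤ 1) : Real.arcsin y ≤ Real.pi / 2 * y := by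
  have hpi := Real.pi_pos
  have ha0 : 0 ≤ Real.arcsin y := Real.arcsin_nonneg.mpr h0
  have ha2 : Real.arcsin y ≤ Real.pi / 2 := Real.arcsin_le_pi_div_two y
  have h := Real.mul_le_sin ha0 ha2
  rw [Real.sin_arcsin (by linarith) h1] at h
  have := mul_le_mul_of_nonneg_left h (by positivity : (0:ℝ) ≤ Real.pi / 2)
  calc Real.arcsin y = Real.pi / 2 * (2 / Real.pi * Real.arcsin y) := by
        field_simp
    _ ≤ Real.pi / 2 * y := this

lemma one_le_sqrt' (j : ℕ) : (1:ℝ) ≤ Real.sqrt (j+1) := by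
  have h := Real.sq_sqrt (show (0:ℝ) ≤ (j:ℕ)+1 by positivity)
  have h2 := Real.sqrt_nonneg ((j:ℝ)+1)
  nlinarith [Nat.cast_nonneg (α := ℝ) j]

lemma psi₁_bounds (j : ℕ) {ε : ℝ} (hε0 : 0 < ε) (hε : ε ≤ 1/2) :
    ε / (2 * Real.sqrt (j+1)) ≤ psi₁ j ε ∧ psi₁ j ε ≤ ε := by
  have hs := one_le_sqrt' j
  set s := Real.sqrt ((j:ℝ)+1) with hsdef
  have hs0 : 0 < s := by linarith
  have harg0 : 0 ≤ ε / (4 * s) := by positivity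
  have harg1 : ε / (4 * s) ≤ 1 := by
    rw [div_le_one (by positivity)]; nlinarith
  have hπ := Real.pi_le_four
  have hπ0 := Real.pi_pos
  constructor
  · have h := le_arcsin' harg0 harg1
    have heq : ε / (2 * s) = 2 * (ε / (4 * s)) := by ring
    rw [psi₁, heq]; linarith
  · have h := arcsin_le' harg0 harg1
    have h4 : ε / (4 * s) ≤ ε / 4 := by
      rw [div_le_div_iff₀ (by positivity) (by norm_num)]; nlinarith
    have h5 : Real.pi / 2 * (ε / (4*s)) ≤ Real.pi / 2 * (ε/4) :=
      mul_le_mul_of_nonneg_left h4 (by positivity)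
    have h6 : Real.pi * ε ≤ 4 * ε := mul_le_mul_of_nonneg_right hπ hε0.le
    rw [psi₁]; nlinarith

lemma psi₂_bounds (j : ℕ) {ε : ℝ} (hε0 : 0 < ε) (hε : ε ≤ 1/2) :
    0 ≤ psi₂ j ε ∧ psi₂ j ε ≤ Real.pi / 4 := by
  have hs := one_le_sqrt' j
  set s := Real.sqrt ((j:ℝ)+1) with hsdef
  have hs0 : 0 < s := by linarith
  have harg0 : 0 ≤ ε / (2 * s) := by positivity
  have harg1 : ε / (2 * s) ≤ 1 := by
    rw [div_le_one (by positivity)]; nlinarith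
  have hπ0 := Real.pi_pos
  constructor
  · have := Real.arcsin_nonneg.mpr harg0
    rw [psi₂]; linarith
  · have h := arcsin_le' harg0 harg1
    have h4 : ε / (2 * s) ≤ 1/4 := by
      rw [div_le_div_iff₀ (by positivity) (by norm_num)]; nlinarith
    have h5 : Real.pi / 2 * (ε / (2*s)) ≤ Real.pi / 2 * (1/4) :=
      mul_le_mul_of_nonneg_left h4 (by positivity)
    rw [psi₂]; nlinarith

lemma Gint_le (j : ℕ) (hj : 1 ≤ j) {ε : ℝ} (hε0 : 0 < ε) (hε : ε ≤ 1/2) :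
    Gint j ε ≤ ε ^ j := by
  obtain ⟨h1, h2⟩ := psi₁_bounds j hε0 hε
  have hπ3 := Real.pi_gt_three
  set ψ := psi₁ j ε with hψ
  have hψ0 : 0 ≤ ψ := le_trans (by positivity) h1
  have hψπ : ψ ≤ Real.pi := by linarith
  have hmono : Gint j ε ≤ ∫ x in (0:ℝ)..ψ, x ^ (j-1) := by
    apply intervalIntegral.integral_mono_on hψ0
    · exact (Real.continuous_sin.pow _).intervalIntegrable _ _
    · exact (continuous_pow _).intervalIntegrable _ _
    · intro x hx
      exact pow_le_pow_left₀
        (Real.sin_nonneg_of_nonneg_of_le_pi hx.1 (hx.2.trans hψπ))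
        (Real.sin_le hx.1) _
  rw [integral_pow (j-1)] at hmono
  have hj' : j - 1 + 1 = j := Nat.succ_pred_eq_of_pos hj
  rw [hj'] at hmono
  have hz : (0:ℝ) ^ j = 0 := zero_pow (by omega)
  rw [hz] at hmono
  have hjj : (1:ℝ) ≤ (j - 1 : ℕ) + 1 := by push_cast; linarith
  calc Gint j ε ≤ (ψ ^ j - 0) / ((j-1:ℕ) + 1) := hmono
    _ ≤ ψ ^ j := by
        rw [sub_zero]; exact div_le_self (by positivity) hjj
    _ ≤ ε ^ j := pow_le_pow_left₀ hψ0 h2 j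

lemma Gint_ge (j : ℕ) (hj : 1 ≤ j) {ε : ℝ} (hε0 : 0 < ε) (hε : ε ≤ 1/2) :
    (2/Real.pi)^(j-1) * (ε / (2 * Real.sqrt (j+1))) ^ j / j ≤ Gint j ε := by
  obtain ⟨h1, h2⟩ := psi₁_bounds j hε0 hε
  have hπ3 := Real.pi_gt_three
  have hπ0 := Real.pi_pos
  set ψ := psi₁ j ε with hψ
  have hlo : 0 ≤ ε / (2 * Real.sqrt (j+1)) := by
    have := one_le_sqrt' j; positivity
  have hψ0 : 0 ≤ ψ := le_trans hlo h1
  have hψ2 : ψ ≤ Real.pi / 2 := by linarith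
  have hmono : (2/Real.pi)^(j-1) * (ψ ^ j / ((j-1:ℕ)+1)) ≤ Gint j ε := by
    have heq : ∫ x in (0:ℝ)..ψ, (2/Real.pi)^(j-1) * x ^ (j-1)
        = (2/Real.pi)^(j-1) * ((ψ ^ ((j-1)+1) - 0 ^ ((j-1)+1)) / ((j-1:ℕ)+1)) := by
      rw [intervalIntegral.integral_const_mul, integral_pow]
    have hmono' : ∫ x in (0:ℝ)..ψ, (2/Real.pi)^(j-1) * x ^ (j-1) ≤ Gint j ε := by
      apply intervalIntegral.integral_mono_on hψ0
      · exact ((continuous_const.mul (continuous_pow _))).intervalIntegrable _ _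
      · exact (Real.continuous_sin.pow _).intervalIntegrable _ _
      · intro x hx
        have hsin := Real.mul_le_sin hx.1 (hx.2.trans hψ2)
        calc (2/Real.pi)^(j-1) * x ^ (j-1) = (2/Real.pi * x) ^ (j-1) := (mul_pow _ _ _).symm
          _ ≤ Real.sin x ^ (j-1) :=
            pow_le_pow_left₀ (mul_nonneg (by positivity) hx.1) hsin _
    rw [heq] at hmono'
    have hz : (0:ℝ) ^ (j-1+1) = 0 := zero_pow (by omega)
    have hj'' : j - 1 + 1 = j := by omega
    rw [hz, sub_zero, hj''] at hmono'
    exact hmono'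
  refine le_trans ?_ hmono
  have hple : (ε / (2 * Real.sqrt (j+1))) ^ j ≤ ψ ^ j := pow_le_pow_left₀ hlo h1 j
  have hcast : ((j-1:ℕ):ℝ) + 1 = (j:ℝ) := by
    have : j - 1 + 1 = j := Nat.succ_pred_eq_of_pos hj
    exact_mod_cast congrArg (Nat.cast (R := ℝ)) this
  rw [hcast] at hmono ⊢
  have hj0 : (0:ℝ) < j := by exact_mod_cast hj
  rw [mul_div_assoc]
  exact mul_le_mul_of_nonneg_left ((div_le_div_iff_of_pos_right hj0).mpr hple) (by positivity)

lemma Fint_le (j : ℕ) (hj : 1 ≤ j) {ε : ℝ} (hε0 : 0 < ε) (hε : ε ≤ 1/2) :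
    Fint j ε ≤ Real.pi / 2 := by
  obtain ⟨h1, h2⟩ := psi₂_bounds j hε0 hε
  have hπ0 := Real.pi_pos
  have hψ2 : psi₂ j ε ≤ Real.pi / 2 := by linarith
  have : Fint j ε ≤ ∫ _ in (psi₂ j ε)..(Real.pi/2), (1:ℝ) := by
    apply intervalIntegral.integral_mono_on hψ2
    · exact (Real.continuous_sin.pow _).intervalIntegrable _ _
    · exact intervalIntegrable_const
    · intro x hx
      exact pow_le_one₀
        (Real.sin_nonneg_of_nonneg_of_le_pi (le_trans h1 hx.1) (by linarith [hx.2]))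
        (Real.sin_le_one x)
  rw [intervalIntegral.integral_const, smul_eq_mul, mul_one] at this
  linarith

lemma Fint_ge (j : ℕ) (hj : 1 ≤ j) {ε : ℝ} (hε0 : 0 < ε) (hε : ε ≤ 1/2) :
    Real.pi / 4 * (1/2)^(j-1) ≤ Fint j ε := by
  obtain ⟨h1, h2⟩ := psi₂_bounds j hε0 hε
  have hπ0 := Real.pi_pos
  have hsplit : Fint j ε
      = (∫ x in (psi₂ j ε)..(Real.pi/4), (Real.sin x) ^ (j-1))
        + ∫ x in (Real.pi/4)..(Real.pi/2), (Real.sin x) ^ (j-1) := by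
    rw [Fint]
    exact (intervalIntegral.integral_add_adjacent_intervals
      ((Real.continuous_sin.pow _).intervalIntegrable _ _)
      ((Real.continuous_sin.pow _).intervalIntegrable _ _)).symm
  have hfirst : 0 ≤ ∫ x in (psi₂ j ε)..(Real.pi/4), (Real.sin x) ^ (j-1) := by
    apply intervalIntegral.integral_nonneg h2
    intro x hx
    exact pow_nonneg
      (Real.sin_nonneg_of_nonneg_of_le_pi (le_trans h1 hx.1) (by linarith [hx.2])) _
  have hhalf : (1:ℝ)/2 ≤ Real.sqrt 2 / 2 := by
    nlinarith [Real.sq_sqrt (show (0:ℝ) ≤ 2 by norm_num), Real.sqrt_nonneg 2]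
  have hsecond : Real.pi/4 * (1/2)^(j-1)
      ≤ ∫ x in (Real.pi/4)..(Real.pi/2), (Real.sin x) ^ (j-1) := by
    have : ∫ _ in (Real.pi/4)..(Real.pi/2), ((1:ℝ)/2)^(j-1)
        ≤ ∫ x in (Real.pi/4)..(Real.pi/2), (Real.sin x) ^ (j-1) := by
      apply intervalIntegral.integral_mono_on (by linarith)
      · exact intervalIntegrable_const
      · exact (Real.continuous_sin.pow _).intervalIntegrable _ _
      · intro x hx
        have hmem1 : Real.pi/4 ∈ Icc (-(Real.pi/2)) (Real.pi/2) :=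
          ⟨by linarith, by linarith⟩
        have hmem2 : x ∈ Icc (-(Real.pi/2)) (Real.pi/2) :=
          ⟨by linarith [hx.1], hx.2⟩
        have := Real.strictMonoOn_sin.monotoneOn hmem1 hmem2 hx.1
        rw [Real.sin_pi_div_four] at this
        exact pow_le_pow_left₀ (by norm_num) (by linarith) _
    rw [intervalIntegral.integral_const, smul_eq_mul] at this
    calc Real.pi/4 * (1/2)^(j-1) = (Real.pi/2 - Real.pi/4) * (1/2)^(j-1) := by ring
      _ ≤ _ := this
  linarith

lemma Gint_bounds (j : ℕ) (hj : 1 ≤ j) :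
    ∃ c > 0, ∀ ε : ℝ, 0 < ε → ε ≤ 1/2 → c * ε ^ j ≤ Gint j ε ∧ Gint j ε ≤ ε ^ j := by
  have hs := one_le_sqrt' j
  have hπ0 := Real.pi_pos
  have hj0 : (0:ℝ) < j := by exact_mod_cast hj
  have hs0 : (0:ℝ) < Real.sqrt (j+1) := by linarith
  refine ⟨(2/Real.pi)^(j-1) / ((2 * Real.sqrt (j+1)) ^ j * j),
    div_pos (by positivity) (mul_pos (by positivity) hj0), ?_⟩
  intro ε hε0 hε
  refine ⟨?_, Gint_le j hj hε0 hε⟩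
  have h := Gint_ge j hj hε0 hε
  have heq : (2/Real.pi)^(j-1) / ((2 * Real.sqrt (j+1)) ^ j * j) * ε ^ j
      = (2/Real.pi)^(j-1) * (ε / (2 * Real.sqrt (j+1))) ^ j / j := by
    rw [div_pow]; ring_nf; simp only [one_div]; ring
  rw [heq]; exact h

lemma Fint_bounds (j : ℕ) (hj : 1 ≤ j) :
    ∃ a > 0, ∀ ε : ℝ, 0 < ε → ε ≤ 1/2 → a ≤ Fint j ε ∧ Fint j ε ≤ Real.pi / 2 := by
  have hπ0 := Real.pi_pos
  exact ⟨Real.pi / 4 * (1/2)^(j-1), by positivity,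
    fun ε hε0 hε => ⟨Fint_ge j hj hε0 hε, Fint_le j hj hε0 hε⟩⟩

set_option maxHeartbeats 1000000 in
/-- Comparison of waist bounds in different dimensions: for `1 ≤ l < k ≤ n`,
`w_l(r)/w_k(r) → ∞` as `r → 0⁺`. -/
theorem waist_bound_ratio_tendsto_atTop
    (n : ℕ) (hn : 2 ≤ n)
    (δ : ℝ → ℝ)
    (hδ_range : ∀ t ∈ Ici (0 : ℝ), δ t ∈ Ico (0 : ℝ) (1 / 2))
    (hδ_mono : MonotoneOn δ (Ici 0))
    (hδ_lim : Tendsto δ (nhdsWithin 0 (Ioi 0)) (nhds 0))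
    (l k : ℕ) (hl : 1 ≤ l) (hlk : l < k) (hkn : k ≤ n) :
    Tendsto (fun r => wB n l δ r / wB n k δ r) (nhdsWithin 0 (Ioi 0)) atTop := by
  have hk1 : 1 ≤ k := hl.trans hlk.le
  obtain ⟨cl, hcl, hGl⟩ := Gint_bounds l hl
  obtain ⟨ck, hck, hGk⟩ := Gint_bounds k hk1
  obtain ⟨al, hal, hFl⟩ := Fint_bounds l hl
  obtain ⟨ak, hak, hFk⟩ := Fint_bounds k hk1
  have hπ0 := Real.pi_pos
  set B : ℝ := (1/2)^n * ak with hB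
  set C : ℝ := 1 + ((l:ℝ)+1)^(l+1) * (Real.pi/2) / cl with hC
  have hB0 : 0 < B := by positivity
  have hC0 : 0 < C := by positivity
  set m := k - l with hm
  have hm1 : 1 ≤ m := by omega
  have hhalf : Tendsto (fun r:ℝ => r/2) (nhdsWithin 0 (Ioi 0)) (nhdsWithin 0 (Ioi 0)) := by
    rw [tendsto_nhdsWithin_iff]
    constructor
    · exact ((continuous_id.div_const 2).tendsto' 0 0 (by norm_num)).mono_left
        nhdsWithin_le_nhds
    · filter_upwards [self_mem_nhdsWithin] with r hr
      exact half_pos (mem_Ioi.mp hr)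
  have hδev : ∀ᶠ r in nhdsWithin (0:ℝ) (Ioi 0), δ (r/2) ≤ 1/4 := by
    have := (hδ_lim.comp hhalf).eventually (gt_mem_nhds (show (0:ℝ) < 1/4 by norm_num))
    filter_upwards [this] with r hr using le_of_lt hr
  have hr1 : ∀ᶠ r in nhdsWithin (0:ℝ) (Ioi 0), r < 1 :=
    Filter.Eventually.filter_mono nhdsWithin_le_nhds (gt_mem_nhds one_pos)
  have hev : ∀ᶠ r in nhdsWithin (0:ℝ) (Ioi 0),
      B / C * ((r/2) ^ m)⁻¹ ≤ wB n l δ r / wB n k δ r := by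
    filter_upwards [self_mem_nhdsWithin, hδev, hr1] with r hr hδ4 hrlt
    have hr0 : (0:ℝ) < r := hr
    have hε0 : (0:ℝ) < r/2 := half_pos hr0
    have hε : r/2 ≤ 1/2 := by linarith
    obtain ⟨hGl1, hGl2⟩ := hGl (r/2) hε0 hε
    obtain ⟨hGk1, hGk2⟩ := hGk (r/2) hε0 hε
    obtain ⟨hFl1, hFl2⟩ := hFl (r/2) hε0 hε
    obtain ⟨hFk1, hFk2⟩ := hFk (r/2) hε0 hε
    obtain ⟨hd0, hdh⟩ := hδ_range (r/2) (le_of_lt hε0)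
    set d := δ (r/2) with hd
    have hGlpos : 0 < Gint l (r/2) := lt_of_lt_of_le (by positivity) hGl1
    have hGkpos : 0 < Gint k (r/2) := lt_of_lt_of_le (by positivity) hGk1
    have hFlpos : 0 < Fint l (r/2) := lt_of_lt_of_le hal hFl1
    have hFkpos : 0 < Fint k (r/2) := lt_of_lt_of_le hak hFk1
    set Tl : ℝ := (1 - 2 * d) ^ (n - l) * ((l : ℝ) + 1) ^ (l + 1) *
      (Fint l (r/2) / Gint l (r/2)) with hTl
    set Tk : ℝ := (1 - 2 * d) ^ (n - k) * ((k : ℝ) + 1) ^ (k + 1) *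
      (Fint k (r/2) / Gint k (r/2)) with hTk
    have h1d : (0:ℝ) ≤ 1 - 2 * d := by linarith
    have hTl0 : 0 ≤ Tl := by
      apply mul_nonneg (mul_nonneg (pow_nonneg h1d _) (by positivity))
      exact div_nonneg hFlpos.le hGlpos.le
    have hTk0 : 0 ≤ Tk := by
      apply mul_nonneg (mul_nonneg (pow_nonneg h1d _) (by positivity))
      exact div_nonneg hFkpos.le hGkpos.le
    have hεl : (0:ℝ) < (r/2)^l := by positivity
    have hεk : (0:ℝ) < (r/2)^k := by positivity
    -- upper bound for the l denominator
    have hTl_le : Tl ≤ (((l:ℝ)+1)^(l+1) * (Real.pi/2) / cl) / (r/2)^l := by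
      have h1 : (1 - 2*d) ^ (n - l) ≤ 1 := pow_le_one₀ h1d (by linarith)
      have h2 : Fint l (r/2) / Gint l (r/2) ≤ (Real.pi/2) / (cl * (r/2)^l) :=
        div_le_div₀ (by positivity) hFl2 (by positivity) hGl1
      have step1 : (1 - 2*d) ^ (n - l) * ((l:ℝ)+1)^(l+1) ≤ ((l:ℝ)+1)^(l+1) := by
        nlinarith [pow_nonneg h1d (n-l), pow_pos (show (0:ℝ) < (l:ℝ)+1 by positivity) (l+1)]
      calc Tl ≤ ((l:ℝ)+1)^(l+1) * ((Real.pi/2) / (cl * (r/2)^l)) := by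
            apply mul_le_mul step1 h2 (div_nonneg hFlpos.le hGlpos.le) (by positivity)
        _ = (((l:ℝ)+1)^(l+1) * (Real.pi/2) / cl) / (r/2)^l := by ring
    have hden_l_le : 1 + Tl ≤ C / (r/2)^l := by
      have hle1 : (r/2)^l ≤ 1 := pow_le_one₀ hε0.le (by linarith)
      have h11 : (1:ℝ) ≤ 1 / (r/2)^l := by
        rw [le_div_iff₀ hεl]; linarith
      have : C / (r/2)^l = 1/(r/2)^l + (((l:ℝ)+1)^(l+1) * (Real.pi/2) / cl) / (r/2)^l := by
        rw [hC]; ring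
      rw [this]
      linarith
    -- lower bound for the k denominator
    have hTk_ge : B / (r/2)^k ≤ Tk := by
      have h3a : ((1:ℝ)/2)^n ≤ ((1:ℝ)/2)^(n-k) :=
        pow_le_pow_of_le_one (by norm_num) (by norm_num) (Nat.sub_le n k)
      have h3b : ((1:ℝ)/2)^(n-k) ≤ (1 - 2*d)^(n-k) :=
        pow_le_pow_left₀ (by norm_num) (by linarith) _
      have h4 : ak / (r/2)^k ≤ Fint k (r/2) / Gint k (r/2) :=
        div_le_div₀ hFkpos.le hFk1 hGkpos hGk2
      have h5 : (1:ℝ) ≤ ((k:ℝ)+1)^(k+1) :=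
        one_le_pow₀ (by linarith [Nat.cast_nonneg (α := ℝ) k])
      have step1 : ((1:ℝ)/2)^n * 1 ≤ (1 - 2*d)^(n-k) * ((k:ℝ)+1)^(k+1) :=
        mul_le_mul (h3a.trans h3b) h5 (by norm_num) (pow_nonneg h1d _)
      have step2 : ((1:ℝ)/2)^n * 1 * (ak / (r/2)^k) ≤ Tk :=
        mul_le_mul step1 h4 (by positivity) (mul_nonneg (pow_nonneg h1d _) (by positivity))
      calc B / (r/2)^k = ((1:ℝ)/2)^n * 1 * (ak / (r/2)^k) := by rw [hB]; ring
        _ ≤ Tk := step2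
    have hden_k_ge : B / (r/2)^k ≤ 1 + Tk := by linarith
    have hden_l_pos : (0:ℝ) < 1 + Tl := by linarith
    have hden_k_pos : (0:ℝ) < 1 + Tk := by linarith
    have hratio : wB n l δ r / wB n k δ r = (1 + Tk) / (1 + Tl) := by
      rw [wB, wB, one_div, one_div, inv_div_inv]
    rw [hratio]
    have hcmp : (B / (r/2)^k) / (C / (r/2)^l) ≤ (1 + Tk) / (1 + Tl) :=
      div_le_div₀ hden_k_pos.le hden_k_ge hden_l_pos hden_l_le
    have hpow : (r/2)^k = (r/2)^m * (r/2)^l := by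
      rw [← pow_add]; congr 1; omega
    have heq : (B / (r/2)^k) / (C / (r/2)^l) = B / C * ((r/2)^m)⁻¹ := by
      rw [hpow]
      field_simp
    rw [heq] at hcmp
    exact hcmp
  have hlim : Tendsto (fun r : ℝ => B / C * ((r/2)^m)⁻¹) (nhdsWithin 0 (Ioi 0)) atTop := by
    apply Tendsto.const_mul_atTop (by positivity : (0:ℝ) < B / C)
    apply Filter.Tendsto.inv_tendsto_nhdsGT_zero
    rw [tendsto_nhdsWithin_iff]
    constructor
    · have hc : Continuous (fun r:ℝ => (r/2)^m) := (continuous_id.div_const 2).pow m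
      have h0 : ((0:ℝ)/2)^m = 0 := by
        rw [zero_div]; exact zero_pow (by omega)
      exact (hc.tendsto' 0 0 h0).mono_left nhdsWithin_le_nhds
    · filter_upwards [self_mem_nhdsWithin] with r hr
      exact pow_pos (half_pos (mem_Ioi.mp hr)) m
  exact tendsto_atTop_mono' _ hev hlim
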